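/- arXiv:0809.0178 — 3 statements merged into one kernel-verified Lean document; each statement's English description precedes it below -/
import Mathlib

section
/- Let Λ_k : ℝ → ℝ be the even piecewise-linear function with vertices at points (i, b_i) for i = -k, ..., k, where b_{-i} = b_i, b_k = 0, and b_i = 2 C(2k,k)^{-1} Σ_{j=i+1}^{k} C(2k, k-j) (-1)^{j+1} (1/j)(1 - i/j) for 0 ≤ i ≤ k-1. Then b_0 satisfies 0 < b_0 < 2 ln 2. -/
open Finset

noncomputable def Lfun (n m : ℕ) : ℝ :=
  ∑ j ∈ Finset.Icc 1 m, (-1 : ℝ) ^ (j+1) * (Nat.choose n (m-j) : ℝ) / (j : ℝ)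

noncomputable def Hc (n : ℕ) : ℝ := ∑ i ∈ Finset.Icc 1 n, (1 : ℝ) / (i : ℝ)

lemma Hc_succ (n : ℕ) : Hc (n+1) = Hc n + 1/((n:ℝ)+1) := by
  unfold Hc
  rw [Finset.sum_Icc_succ_top (Nat.succ_le_succ (Nat.zero_le n))]
  push_cast; ring

lemma alt_sum (n : ℕ) : ∑ j ∈ Finset.Icc 1 (n+1), (-1:ℝ)^(j+1) * (Nat.choose (n+1) j : ℝ) = 1 := by
  have h0 : ∑ m ∈ Finset.range (n + 2), (-1:ℤ) ^ m * ((n+1).choose m : ℤ) = 0 := by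
    rw [Int.alternating_sum_range_choose]
    simp
  have h0' : ∑ m ∈ Finset.range (n + 2), (-1:ℝ) ^ m * ((n+1).choose m : ℝ) = 0 := by
    exact_mod_cast congrArg (Int.cast : ℤ → ℝ) h0
  rw [Finset.sum_range_succ'] at h0'
  simp only [pow_zero, one_mul, Nat.choose_zero_right, Nat.cast_one] at h0'
  have hre : ∑ j ∈ Finset.Icc 1 (n+1), (-1:ℝ)^(j+1) * (Nat.choose (n+1) j : ℝ)
      = ∑ i ∈ Finset.range (n+1), (-1:ℝ)^(i+2) * (Nat.choose (n+1) (i+1) : ℝ) := by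
    have : Finset.Icc 1 (n+1) = Finset.Ico 1 (n+2) := by
      rw [show n + 2 = n + 1 + 1 from rfl, Finset.Ico_add_one_right_eq_Icc]
    rw [this, Finset.sum_Ico_eq_sum_range]
    have h2 : n + 2 - 1 = n + 1 := by omega
    rw [h2]
    apply Finset.sum_congr rfl
    intro i _
    have : 1 + i = i + 1 := by omega
    rw [this]
  rw [hre]
  have : ∀ i, (-1:ℝ)^(i+2) = (-1:ℝ)^i := by intro i; rw [pow_add]; norm_num
  simp only [this]
  have : ∀ i, (-1:ℝ)^(i+1) = -(-1:ℝ)^i := by intro i; rw [pow_add]; ring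
  simp only [this, neg_mul, Finset.sum_neg_distrib] at h0'
  linarith [h0']

lemma lemA (n : ℕ) : Lfun n (n+1) = 1/((n:ℝ)+1) := by
  unfold Lfun
  have key : ∀ j ∈ Finset.Icc 1 (n+1),
      (-1 : ℝ) ^ (j+1) * (Nat.choose n (n+1-j) : ℝ) / (j : ℝ)
      = (1/((n:ℝ)+1)) * ((-1:ℝ)^(j+1) * (Nat.choose (n+1) j : ℝ)) := by
    intro j hj
    simp only [Finset.mem_Icc] at hj
    obtain ⟨h1, h2⟩ := hj
    obtain ⟨i, rfl⟩ := Nat.exists_eq_add_of_le h1  -- j = 1 + i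
    have hsymm : Nat.choose n (n + 1 - (1+i)) = Nat.choose n i := by
      have : n + 1 - (1+i) = n - i := by omega
      rw [this, Nat.choose_symm (by omega)]
    have habs : (n + 1) * Nat.choose n i = Nat.choose (n+1) (i+1) * (i+1) :=
      Nat.add_one_mul_choose_eq n i
    have habs' : ((n:ℝ) + 1) * (Nat.choose n i : ℝ) = (Nat.choose (n+1) (i+1) : ℝ) * ((i:ℝ)+1) := by
      exact_mod_cast habs
    rw [hsymm]
    have h1i : ((1:ℕ) + i : ℕ) = i + 1 := by omega
    rw [h1i]
    have hi1 : ((i:ℝ)+1) ≠ 0 := by positivity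
    have hn1 : ((n:ℝ)+1) ≠ 0 := by positivity
    have hcast : ((i+1 : ℕ) : ℝ) = (i:ℝ)+1 := by push_cast; ring
    rw [hcast]
    field_simp
    linear_combination habs'
  rw [Finset.sum_congr rfl key, ← Finset.mul_sum, alt_sum, mul_one]

lemma lemB (n m : ℕ) : Lfun (n+1) (m+1) = Lfun n (m+1) + Lfun n m := by
  unfold Lfun
  rw [Finset.sum_Icc_succ_top (by omega : 1 ≤ m+1), Finset.sum_Icc_succ_top (by omega : 1 ≤ m+1)]
  have hsplit : ∀ j ∈ Finset.Icc 1 m,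
      (-1:ℝ)^(j+1) * (Nat.choose (n+1) (m+1-j) : ℝ) / j
      = (-1:ℝ)^(j+1) * (Nat.choose n (m+1-j) : ℝ) / j
        + (-1:ℝ)^(j+1) * (Nat.choose n (m-j) : ℝ) / j := by
    intro j hj
    simp only [Finset.mem_Icc] at hj
    have hmj : m + 1 - j = (m - j) + 1 := by omega
    rw [hmj, Nat.choose_succ_succ]
    push_cast
    ring
  rw [Finset.sum_congr rfl hsplit, Finset.sum_add_distrib]
  simp only [Nat.sub_self, Nat.add_sub_cancel_left, Nat.choose_zero_right]
  push_cast
  ring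

lemma Lfun_zero (n : ℕ) : Lfun n 0 = 0 := by
  unfold Lfun
  simp

lemma Hc_zero : Hc 0 = 0 := by unfold Hc; simp

lemma auxid (a b x y c1 c2 c3 : ℝ) (hx : x ≠ 0) (hy : y ≠ 0) (hc3 : c3 = c2 + c1)
    (hkey : c1 * x = c3 * y) :
    c1 * (a - b) + c2 * (a - (b + 1/y)) = c3 * ((a + 1/x) - (b + 1/y)) := by
  field_simp
  linear_combination (x - (a-b)*x*y) * hc3 + hkey

lemma main_id : ∀ n m : ℕ, m ≤ n → Lfun n m = (Nat.choose n m : ℝ) * (Hc n - Hc (n-m)) := by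
  intro n
  induction n with
  | zero =>
    intro m hm
    interval_cases m
    simp [Lfun_zero]
  | succ n ih =>
    intro m hm
    match m with
    | 0 => simp [Lfun_zero]
    | (m'+1) =>
      rw [lemB]
      rcases Nat.lt_or_ge m' n with hlt | hge
      · -- m'+1 ≤ n
        have h1 : m' + 1 ≤ n := hlt
        rw [ih (m'+1) h1, ih m' (by omega)]
        set r := n - (m'+1) with hr
        have hnm : n - m' = r + 1 := by omega
        have hnm2 : n + 1 - (m'+1) = r + 1 := by omega
        rw [hnm, hnm2, Hc_succ, Hc_succ]
        have hc3 : (Nat.choose (n+1) (m'+1) : ℝ) = (Nat.choose n m' : ℝ) + (Nat.choose n (m'+1) : ℝ) := by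
          rw [Nat.choose_succ_succ]; push_cast; ring
        have hkeyN : Nat.choose n (m'+1) * (n + 1) = Nat.choose (n+1) (m'+1) * (n + 1 - (m'+1)) :=
          Nat.choose_mul_succ_eq n (m'+1)
        rw [hnm2] at hkeyN
        have hkey : (Nat.choose n (m'+1) : ℝ) * ((n:ℝ) + 1) = (Nat.choose (n+1) (m'+1) : ℝ) * ((r:ℝ) + 1) := by
          exact_mod_cast hkeyN
        have hx : ((n:ℝ) + 1) ≠ 0 := by positivity
        have hy : ((r:ℝ) + 1) ≠ 0 := by positivity
        exact auxid (Hc n) (Hc r) ((n:ℝ)+1) ((r:ℝ)+1) _ _ _ hx hy hc3 hkey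
      · -- m' = n
        have hm' : m' = n := by omega
        subst hm'
        rw [lemA, ih m' le_rfl]
        simp only [Nat.sub_self, Nat.choose_self, Nat.cast_one, Hc_zero, Hc_succ]
        ring

lemma Hc_diff (k : ℕ) : Hc (2*k) - Hc k = ∑ i ∈ Finset.Ioc k (2*k), (1:ℝ)/(i:ℝ) := by
  unfold Hc
  have h1 : Finset.Icc 1 (2*k) = Finset.Ioc 0 (2*k) := Finset.Icc_add_one_left_eq_Ioc 0 (2*k)
  have h2 : Finset.Icc 1 k = Finset.Ioc 0 k := Finset.Icc_add_one_left_eq_Ioc 0 k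
  rw [h1, h2, ← Finset.sum_Ioc_consecutive (fun i => (1:ℝ)/(i:ℝ)) (Nat.zero_le k) (by omega : k ≤ 2*k)]
  ring

lemma Hc_diff_pos (k : ℕ) (hk : 1 ≤ k) : 0 < Hc (2*k) - Hc k := by
  rw [Hc_diff]
  apply Finset.sum_pos
  · intro i hi
    simp only [Finset.mem_Ioc] at hi
    have hi0 : 0 < i := by omega
    have : 0 < (i:ℝ) := by exact_mod_cast hi0
    positivity
  · exact ⟨2*k, by simp only [Finset.mem_Ioc]; omega⟩

lemma term_lt (a : ℕ) (ha : 1 ≤ a) :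
    (1:ℝ)/((a:ℝ)+1) < Real.log ((a:ℝ)+1) - Real.log (a:ℝ) := by
  have ha0 : (0:ℝ) < a := by exact_mod_cast ha
  have ha1 : (0:ℝ) < (a:ℝ)+1 := by linarith
  have hx : (0:ℝ) < (a:ℝ)/((a:ℝ)+1) := by positivity
  have hx1 : (a:ℝ)/((a:ℝ)+1) ≠ 1 := by
    intro h
    field_simp at h
    linarith
  have := Real.log_lt_sub_one_of_pos hx hx1
  rw [Real.log_div (by positivity) (by positivity)] at this
  have heq : (a:ℝ)/((a:ℝ)+1) - 1 = -(1/((a:ℝ)+1)) := by field_simp; ring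
  rw [heq] at this
  linarith

lemma Hc_diff_lt (k : ℕ) (hk : 1 ≤ k) : Hc (2*k) - Hc k < Real.log 2 := by
  rw [Hc_diff]
  have hk0 : (0:ℝ) < (k:ℝ) := by exact_mod_cast hk
  have htel : ∑ i ∈ Finset.range k,
      (Real.log ((k:ℝ) + ((i:ℝ)+1)) - Real.log ((k:ℝ) + (i:ℝ))) = Real.log 2 := by
    have h := Finset.sum_range_sub (fun i : ℕ => Real.log ((k:ℝ) + (i:ℝ))) k
    simp only [Nat.cast_add, Nat.cast_one, Nat.cast_zero, add_zero] at h
    have h2 : Real.log ((k:ℝ) + (k:ℝ)) - Real.log (k:ℝ) = Real.log 2 := by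
      have : (k:ℝ) + (k:ℝ) = 2 * (k:ℝ) := by ring
      rw [this, Real.log_mul (by norm_num) (ne_of_gt hk0)]
      ring
    calc ∑ i ∈ Finset.range k, (Real.log ((k:ℝ) + ((i:ℝ)+1)) - Real.log ((k:ℝ) + (i:ℝ)))
        = ∑ i ∈ Finset.range k, ((fun i : ℕ => Real.log ((k:ℝ) + (i:ℝ))) (i+1)
            - (fun i : ℕ => Real.log ((k:ℝ) + (i:ℝ))) i) := by
          apply Finset.sum_congr rfl; intro i _; push_cast; ring_nf
      _ = Real.log ((k:ℝ) + (k:ℝ)) - Real.log ((k:ℝ) + (0:ℕ)) := by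
          rw [Finset.sum_range_sub (fun i : ℕ => Real.log ((k:ℝ) + (i:ℝ))) k]
      _ = Real.log 2 := by rw [Nat.cast_zero, add_zero]; exact h2
  rw [← htel]
  have hre : ∑ i ∈ Finset.Ioc k (2*k), (1:ℝ)/(i:ℝ)
      = ∑ i ∈ Finset.range k, (1:ℝ)/((k:ℝ) + (i:ℝ) + 1) := by
    have h1 : Finset.Ioc k (2*k) = Finset.Ico (k+1) (2*k+1) := by
      rw [Finset.Ico_add_one_right_eq_Icc, Finset.Icc_add_one_left_eq_Ioc]
    rw [h1, Finset.sum_Ico_eq_sum_range]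
    have h2 : 2*k+1-(k+1) = k := by omega
    rw [h2]
    apply Finset.sum_congr rfl
    intro i _
    push_cast
    ring_nf
  rw [hre]
  apply Finset.sum_lt_sum_of_nonempty (Finset.nonempty_range_iff.mpr (by omega))
  intro i _
  have := term_lt (k+i) (by omega)
  push_cast at this ⊢
  rw [← add_assoc]
  exact this

theorem stmt4 (k : ℕ) (hk : 1 ≤ k) (b0 : ℝ)
    (hb0 : b0 = 2 * ((Nat.choose (2*k) k : ℝ))⁻¹ *
      ∑ j ∈ Finset.Icc 1 k, (-1 : ℝ) ^ (j+1) * (Nat.choose (2*k) (k-j) : ℝ) / (j : ℝ)) :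
    0 < b0 ∧ b0 < 2 * Real.log 2 := by
  have hL : (∑ j ∈ Finset.Icc 1 k, (-1 : ℝ) ^ (j+1) * (Nat.choose (2*k) (k-j) : ℝ) / (j : ℝ))
      = Lfun (2*k) k := rfl
  have hid := main_id (2*k) k (by omega)
  have h2kk : 2*k - k = k := by omega
  rw [h2kk] at hid
  have hC : (0:ℝ) < (Nat.choose (2*k) k : ℝ) := by
    exact_mod_cast Nat.choose_pos (by omega : k ≤ 2*k)
  have hb : b0 = 2 * (Hc (2*k) - Hc k) := by
    rw [hb0, hL, hid]
    field_simp
  rw [hb]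
  constructor
  · have := Hc_diff_pos k hk; linarith
  · have := Hc_diff_lt k hk; linarith
end

section
/- With b_i as defined from the Favard-type kernel, one has 0 > b_1 > 2 ln 2 − π²/6 for all k ≥ 2. -/
open Real

namespace Stmt5Aux
open Finset

lemma choose_ratio1 {k j : ℕ} (h : j ≤ k) :
    (k + 1 - j) * Nat.choose (2*k) (k+1-j) = (k+j) * Nat.choose (2*k) (k-j) := by
  have h1 : k + 1 - j = (k - j) + 1 := by omega
  rw [h1, mul_comm, Nat.choose_succ_right_eq]
  have h2 : 2*k - (k-j) = k + j := by omega
  rw [h2, mul_comm]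

lemma cast_ratio1 {k j : ℕ} (h : j ≤ k) :
    ((k:ℝ) + 1 - j) * (Nat.choose (2*k) (k+1-j) : ℝ) = ((k:ℝ)+j) * (Nat.choose (2*k) (k-j) : ℝ) := by
  have := congrArg (Nat.cast : ℕ → ℝ) (choose_ratio1 h)
  push_cast [Nat.cast_sub (show j ≤ k+1 by omega)] at this
  linarith [this]

lemma choose_ratio2 {k j : ℕ} (h : j ≤ k) :
    ((k+1-j) * (k+1+j)) * Nat.choose (2*k+2) (k+1-j)
      = ((2*k+1) * (2*k+2)) * Nat.choose (2*k) (k-j) := by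
  have e1 : (2*k+2) * Nat.choose (2*k+1) (k-j) = Nat.choose (2*k+2) (k+1-j) * (k+1-j) := by
    have h1 : k + 1 - j = (k - j) + 1 := by omega
    rw [h1]
    exact Nat.add_one_mul_choose_eq (2*k+1) (k-j)
  have e2 : Nat.choose (2*k+1) (k-j) = Nat.choose (2*k+1) (k+1+j) := by
    have := Nat.choose_symm (show k+1+j ≤ 2*k+1 by omega)
    rw [show 2*k+1-(k+1+j) = k - j by omega] at this
    exact this
  have e3 : (2*k+1) * Nat.choose (2*k) (k+j) = Nat.choose (2*k+1) (k+1+j) * (k+1+j) := by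
    have := Nat.add_one_mul_choose_eq (2*k) (k+j)
    simpa [Nat.succ_eq_add_one, show k+j+1 = k+1+j by omega] using this
  have e4 : Nat.choose (2*k) (k+j) = Nat.choose (2*k) (k-j) := by
    have := Nat.choose_symm (show k+j ≤ 2*k by omega)
    rw [show 2*k-(k+j) = k - j by omega] at this
    exact this.symm
  calc ((k+1-j) * (k+1+j)) * Nat.choose (2*k+2) (k+1-j)
      = (k+1+j) * (Nat.choose (2*k+2) (k+1-j) * (k+1-j)) := by ring
    _ = (k+1+j) * ((2*k+2) * Nat.choose (2*k+1) (k-j)) := by rw [e1]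
    _ = (2*k+2) * (Nat.choose (2*k+1) (k+1+j) * (k+1+j)) := by rw [e2]; ring
    _ = (2*k+2) * ((2*k+1) * Nat.choose (2*k) (k+j)) := by rw [e3]
    _ = ((2*k+1) * (2*k+2)) * Nat.choose (2*k) (k-j) := by rw [e4]; ring

lemma cast_ratio2 {k j : ℕ} (h : j ≤ k) :
    (((k:ℝ)+1-j) * ((k:ℝ)+1+j)) * (Nat.choose (2*k+2) (k+1-j) : ℝ)
      = ((2*(k:ℝ)+1) * (2*(k:ℝ)+2)) * (Nat.choose (2*k) (k-j) : ℝ) := by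
  have := congrArg (Nat.cast : ℕ → ℝ) (choose_ratio2 h)
  push_cast [Nat.cast_sub (show j ≤ k+1 by omega)] at this
  linarith [this]

noncomputable def Uf (k j : ℕ) : ℝ :=
  (-1:ℝ)^j * (Nat.choose (2*k) (k+1-j) : ℝ) *
    (2*((k:ℝ)+1)*(j:ℝ)^2 + (k:ℝ)*(2*(k:ℝ)+1)*(j:ℝ) - (3*(k:ℝ)+2)*((k:ℝ)+1)) /
    (2*(2*(k:ℝ)+1)*((k:ℝ)+1)*((k:ℝ)+(j:ℝ))*((k:ℝ)+(j:ℝ)+1))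

noncomputable def wf (k j : ℕ) : ℝ :=
  (-1:ℝ)^(j+1) * (Nat.choose (2*k) (k-j) : ℝ) * ((j:ℝ)-1) / (((k:ℝ)+1)^2 - (j:ℝ)^2)

lemma Ustep {k j : ℕ} (h2 : 2 ≤ j) (hjk : j ≤ k) : Uf k (j+1) - Uf k j = wf k j := by
  have hj2 : (2:ℝ) ≤ (j:ℝ) := by exact_mod_cast h2
  have hjkR : (j:ℝ) ≤ (k:ℝ) := by exact_mod_cast hjk
  have h0 : (0:ℝ) < (k:ℝ) + 1 - (j:ℝ) := by linarith
  have h1 : (0:ℝ) < (k:ℝ) + 1 + (j:ℝ) := by linarith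
  have h3 : (0:ℝ) < (k:ℝ) + (j:ℝ) := by linarith
  have h4 : (0:ℝ) < 2*(k:ℝ)+1 := by linarith
  have h5 : (0:ℝ) < (k:ℝ)+1 := by linarith
  unfold Uf wf
  rw [show k+1-(j+1) = k - j by omega]
  have hC : (Nat.choose (2*k) (k+1-j) : ℝ)
      = ((k:ℝ)+j) * (Nat.choose (2*k) (k-j) : ℝ) / ((k:ℝ)+1-j) := by
    rw [eq_div_iff h0.ne']
    linarith [cast_ratio1 hjk]
  rw [hC, show (((k:ℝ)+1)^2 - (j:ℝ)^2) = (((k:ℝ)+1-j) * ((k:ℝ)+1+j)) by ring]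
  push_cast
  rw [pow_succ]
  field_simp
  ring

lemma Wsum {k : ℕ} (hk : 1 ≤ k) :
    ∑ j ∈ Icc 2 k, wf k j = Uf k (k+1) - Uf k 2 := by
  rw [← Finset.Ico_add_one_right_eq_Icc, Finset.sum_Ico_eq_sum_range]
  rw [show k+1-2 = k-1 by omega]
  rw [Finset.sum_congr rfl (fun i hi => by
    have hi' : i < k - 1 := Finset.mem_range.mp hi
    exact (Ustep (by omega) (by omega)).symm)]
  simp only [show ∀ i:ℕ, 2+i+1 = 2+(i+1) from fun i => by omega]
  rw [Finset.sum_range_sub (fun i => Uf k (2+i)) (k-1)]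
  rw [show 2+(k-1) = k+1 by omega]


noncomputable def Sf (k : ℕ) : ℝ := ∑ i ∈ Icc (k+1) (2*k), (1:ℝ)/(i:ℝ)
noncomputable def Qf (k : ℕ) : ℝ := ∑ i ∈ Icc 1 k, (1:ℝ)/(i:ℝ)^2

lemma Qsucc (k : ℕ) : Qf (k+1) = Qf k + 1/((k:ℝ)+1)^2 := by
  unfold Qf
  rw [← Finset.insert_Icc_right_eq_Icc_add_one (by omega), Finset.sum_insert (by simp)]
  push_cast
  ring

lemma Ssucc {k : ℕ} (hk : 1 ≤ k) :
    Sf (k+1) = Sf k + 1/(2*(k:ℝ)+1) + 1/(2*(k:ℝ)+2) - 1/((k:ℝ)+1) := by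
  unfold Sf
  have hA : ∑ i ∈ Icc (k+1) (2*(k+1)), (1:ℝ)/(i:ℝ)
      = ∑ i ∈ Icc (k+1) (2*k), (1:ℝ)/(i:ℝ) + 1/((2*k+1:ℕ):ℝ) + 1/((2*k+2:ℕ):ℝ) := by
    rw [show 2*(k+1) = (2*k+1)+1 by omega,
      ← Finset.insert_Icc_right_eq_Icc_add_one (show k+1 ≤ 2*k+1+1 by omega), Finset.sum_insert (by
        simp [Finset.mem_Icc]; try omega),
      ← Finset.insert_Icc_right_eq_Icc_add_one (show k+1 ≤ 2*k+1 by omega), Finset.sum_insert (by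
        simp [Finset.mem_Icc]; try omega)]
    ring
  have hB : ∑ i ∈ Icc (k+1) (2*(k+1)), (1:ℝ)/(i:ℝ)
      = 1/((k+1:ℕ):ℝ) + ∑ i ∈ Icc (k+1+1) (2*(k+1)), (1:ℝ)/(i:ℝ) := by
    rw [← Finset.insert_Icc_add_one_left_eq_Icc (show k+1 ≤ 2*(k+1) by omega), Finset.sum_insert (by
      simp [Finset.mem_Icc]; try omega)]
  have := hA.symm.trans hB
  push_cast at this ⊢
  linarith

lemma Bid (k : ℕ) :
    ∑ j ∈ Icc 2 k, (-1:ℝ)^(j+1) * (Nat.choose (2*k) (k-j) : ℝ) * (1/(j:ℝ) - 1/(j:ℝ)^2)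
      = (Nat.choose (2*k) k : ℝ) * (Sf k - Qf k / 2) := by
  induction k with
  | zero => simp [Sf, Qf]
  | succ k ih =>
    rcases Nat.eq_zero_or_pos k with rfl | hk
    · norm_num [Sf, Qf, show Finset.Icc 2 1 = ∅ from rfl, Finset.Icc_self]
    -- split off the top term j = k+1
    rw [← Finset.insert_Icc_right_eq_Icc_add_one (show 2 ≤ k+1 by omega), Finset.sum_insert (by
      simp [Finset.mem_Icc])]
    have hterm : ∀ j ∈ Icc 2 k,
        (-1:ℝ)^(j+1) * (Nat.choose (2*(k+1)) (k+1-j) : ℝ) * (1/(j:ℝ) - 1/(j:ℝ)^2)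
        = ((2*(k:ℝ)+1)*(2*(k:ℝ)+2)/((k:ℝ)+1)^2) *
            ((-1:ℝ)^(j+1) * (Nat.choose (2*k) (k-j) : ℝ) * (1/(j:ℝ) - 1/(j:ℝ)^2) + wf k j) := by
      intro j hj
      rw [Finset.mem_Icc] at hj
      obtain ⟨hj2, hjk⟩ := hj
      have hj2R : (2:ℝ) ≤ (j:ℝ) := by exact_mod_cast hj2
      have hjkR : (j:ℝ) ≤ (k:ℝ) := by exact_mod_cast hjk
      have h0 : (0:ℝ) < (k:ℝ) + 1 - (j:ℝ) := by linarith
      have h1 : (0:ℝ) < (k:ℝ) + 1 + (j:ℝ) := by linarith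
      have hC : (Nat.choose (2*(k+1)) (k+1-j) : ℝ)
          = ((2*(k:ℝ)+1) * (2*(k:ℝ)+2)) * (Nat.choose (2*k) (k-j) : ℝ)
            / (((k:ℝ)+1-j) * ((k:ℝ)+1+j)) := by
        rw [eq_div_iff (by positivity)]
        rw [show 2*(k+1) = 2*k+2 by omega]
        linarith [cast_ratio2 hjk]
      rw [hC]
      unfold wf
      rw [show (((k:ℝ)+1)^2 - (j:ℝ)^2) = (((k:ℝ)+1-j) * ((k:ℝ)+1+j)) by ring]
      have hj0 : (0:ℝ) < (j:ℝ) := by linarith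
      field_simp
      ring
    rw [Finset.sum_congr rfl hterm, ← Finset.mul_sum, Finset.sum_add_distrib, ih, Wsum hk]
    -- now pure algebra
    have hY : ((k:ℝ)+1) * (Nat.choose (2*k) (k-1) : ℝ) = (k:ℝ) * (Nat.choose (2*k) k : ℝ) := by
      have := Nat.choose_succ_right_eq (2*k) (k-1)
      rw [show (k-1)+1 = k by omega, show 2*k - (k-1) = k+1 by omega] at this
      have := congrArg (Nat.cast : ℕ → ℝ) this
      push_cast at this
      linarith
    have hZ : ((k:ℝ)+1)^2 * (Nat.choose (2*(k+1)) (k+1) : ℝ)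
        = (2*(k:ℝ)+1)*(2*(k:ℝ)+2) * (Nat.choose (2*k) k : ℝ) := by
      have := cast_ratio2 (show 0 ≤ k by omega)
      rw [show k+1-0 = k+1 by omega, show k-0 = k by omega] at this
      rw [show 2*(k+1) = 2*k+2 by omega]
      push_cast at this
      nlinarith [this]
    have hkR : (1:ℝ) ≤ (k:ℝ) := by exact_mod_cast hk
    -- endpoint values of Uf
    have hU2 : Uf k 2 = (Nat.choose (2*k) (k-1) : ℝ) * (((k:ℝ)+2)*((k:ℝ)+3))
        / (2*(2*(k:ℝ)+1)*((k:ℝ)+1)*((k:ℝ)+2)*((k:ℝ)+3)) := by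
      unfold Uf
      rw [show k+1-2 = k-1 by omega]
      norm_num
      ring_nf
    have hUk : Uf k (k+1) = (-1:ℝ)^(k+1) *
        (2*((k:ℝ)+1)*((k:ℝ)+1)^2 + (k:ℝ)*(2*(k:ℝ)+1)*((k:ℝ)+1) - (3*(k:ℝ)+2)*((k:ℝ)+1)) /
        (2*(2*(k:ℝ)+1)*((k:ℝ)+1)*(2*(k:ℝ)+1)*(2*(k:ℝ)+2)) := by
      unfold Uf
      rw [show k+1-(k+1) = 0 by omega, Nat.choose_zero_right]
      push_cast
      ring_nf
    rw [hU2, hUk, Qsucc, Ssucc hk]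
    have h5 : (0:ℝ) < (k:ℝ)+1 := by linarith
    have hYv : (Nat.choose (2*k) (k-1) : ℝ) = (k:ℝ) * (Nat.choose (2*k) k : ℝ) / ((k:ℝ)+1) := by
      rw [eq_div_iff h5.ne']; linarith
    have hZv : (Nat.choose (2*(k+1)) (k+1) : ℝ)
        = (2*(k:ℝ)+1)*(2*(k:ℝ)+2) * (Nat.choose (2*k) k : ℝ) / ((k:ℝ)+1)^2 := by
      rw [eq_div_iff (by positivity)]; linarith
    rw [hYv, hZv, show k+1-(k+1) = 0 by omega, Nat.choose_zero_right]
    have h4 : (0:ℝ) < 2*(k:ℝ)+1 := by linarith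
    push_cast
    simp only [pow_succ]
    field_simp
    ring


lemma Sralt (k : ℕ) : Sf k = ∑ m ∈ range k, (1:ℝ)/((k:ℝ)+(m:ℝ)+1) := by
  unfold Sf
  rw [← Finset.Ico_add_one_right_eq_Icc, Finset.sum_Ico_eq_sum_range,
    show 2*k+1-(k+1) = k by omega]
  exact Finset.sum_congr rfl (fun m _ => by push_cast; ring_nf)

lemma Qalt (k : ℕ) : Qf k = ∑ m ∈ range k, (1:ℝ)/((m:ℝ)+1)^2 := by
  unfold Qf
  rw [← Finset.Ico_add_one_right_eq_Icc, Finset.sum_Ico_eq_sum_range,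
    show k+1-1 = k by omega]
  exact Finset.sum_congr rfl (fun m _ => by push_cast; ring_nf)

lemma Salt (k : ℕ) : Sf k = ∑ m ∈ range k, ((1:ℝ)/(2*(m:ℝ)+1) - 1/(2*(m:ℝ)+2)) := by
  induction k with
  | zero => simp [Sf]
  | succ k ih =>
    rcases Nat.eq_zero_or_pos k with rfl | hk
    · norm_num [Sf, Finset.Icc_self]
    rw [Ssucc hk, ih, Finset.sum_range_succ]
    push_cast
    have h5 : (0:ℝ) < (k:ℝ)+1 := by positivity
    have h4 : (0:ℝ) < 2*(k:ℝ)+1 := by positivity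
    field_simp
    ring

lemma part1 {k : ℕ} (hk : 2 ≤ k) : 2 * Sf k - Qf k < 0 := by
  have hterm : ∀ m : ℕ, (1:ℝ)/((m:ℝ)+1)^2 - 2*((1:ℝ)/(2*(m:ℝ)+1) - 1/(2*(m:ℝ)+2))
      = (m:ℝ)/(((m:ℝ)+1)^2*(2*(m:ℝ)+1)) := by
    intro m
    have h1 : (0:ℝ) < (m:ℝ)+1 := by positivity
    have h2 : (0:ℝ) < 2*(m:ℝ)+1 := by positivity
    have h3 : (0:ℝ) < 2*(m:ℝ)+2 := by positivity
    field_simp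
    ring
  have key : 0 < Qf k - 2 * Sf k := by
    rw [Qalt, Salt, Finset.mul_sum, ← Finset.sum_sub_distrib]
    refine Finset.sum_pos' (fun m _ => by rw [hterm m]; positivity)
      ⟨1, Finset.mem_range.mpr (by omega), by rw [hterm 1]; norm_num⟩
  linarith


lemma basel_tail (k : ℕ) : 1/((k:ℝ)+1) < π^2/6 - Qf k := by
  have hz := hasSum_zeta_two
  have hsum : Summable (fun n : ℕ => (1:ℝ)/(n:ℝ)^2) := hz.summable
  have hsplit := Summable.sum_add_tsum_nat_add (f := fun n : ℕ => (1:ℝ)/(n:ℝ)^2) (k+1) hsum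
  rw [hz.tsum_eq] at hsplit
  have hrange : ∑ n ∈ range (k+1), (1:ℝ)/(n:ℝ)^2 = Qf k := by
    rw [Finset.sum_range_succ', Qalt]
    push_cast
    norm_num
  have gnonneg : ∀ n : ℕ, (0:ℝ) ≤ 1/((n:ℝ)+(k:ℝ)+1) - 1/((n:ℝ)+(k:ℝ)+2) := by
    intro n
    have h1 : (0:ℝ) < (n:ℝ)+(k:ℝ)+1 := by positivity
    have h2 : (0:ℝ) < (n:ℝ)+(k:ℝ)+2 := by positivity
    have := one_div_le_one_div_of_le h1 (by linarith : (n:ℝ)+(k:ℝ)+1 ≤ (n:ℝ)+(k:ℝ)+2)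
    linarith
  have htel : HasSum (fun n : ℕ => 1/((n:ℝ)+(k:ℝ)+1) - 1/((n:ℝ)+(k:ℝ)+2)) (1/((k:ℝ)+1)) := by
    rw [hasSum_iff_tendsto_nat_of_nonneg gnonneg]
    have hps : ∀ n:ℕ, ∑ i ∈ range n, (1/((i:ℝ)+(k:ℝ)+1) - 1/((i:ℝ)+(k:ℝ)+2))
        = 1/((k:ℝ)+1) - 1/((n:ℝ)+(k:ℝ)+1) := by
      intro n
      have h := Finset.sum_range_sub' (f := fun i : ℕ => 1/((i:ℝ)+(k:ℝ)+1)) n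
      have e : ∀ i ∈ range n, 1/((i:ℝ)+(k:ℝ)+1) - 1/((i:ℝ)+(k:ℝ)+2)
          = 1/((i:ℝ)+(k:ℝ)+1) - 1/((((i+1:ℕ)):ℝ)+(k:ℝ)+1) := by
        intro i _; push_cast; ring_nf
      rw [Finset.sum_congr rfl e, h]
      push_cast
      ring_nf
    simp only [hps]
    have ht0 : Filter.Tendsto (fun n : ℕ => 1/((n:ℝ)+(k:ℝ)+1)) Filter.atTop (nhds 0) := by
      apply squeeze_zero (fun n => by positivity) (fun n => ?_) tendsto_one_div_add_atTop_nhds_zero_nat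
      apply one_div_le_one_div_of_le (by positivity)
      have : (0:ℝ) ≤ (k:ℝ) := by positivity
      linarith
    simpa using (tendsto_const_nhds.sub ht0)
  have hle' : ∀ n : ℕ, 1/((n:ℝ)+(k:ℝ)+1) - 1/((n:ℝ)+(k:ℝ)+2) < (1:ℝ)/(((n+(k+1)):ℕ):ℝ)^2 := by
    intro n
    have h1 : (0:ℝ) < (n:ℝ)+(k:ℝ)+1 := by positivity
    have h2 : (0:ℝ) < (n:ℝ)+(k:ℝ)+2 := by positivity
    have e1 : 1/((n:ℝ)+(k:ℝ)+1) - 1/((n:ℝ)+(k:ℝ)+2)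
        = 1/(((n:ℝ)+(k:ℝ)+1)*((n:ℝ)+(k:ℝ)+2)) := by field_simp; ring
    have e2 : ((((n+(k+1)):ℕ)):ℝ) = (n:ℝ)+(k:ℝ)+1 := by push_cast; ring
    rw [e1, e2]
    apply one_div_lt_one_div_of_lt (by positivity)
    nlinarith
  have hsummable : Summable (fun n : ℕ => (1:ℝ)/(((n+(k+1)):ℕ):ℝ)^2) := by
    exact_mod_cast (summable_nat_add_iff (k+1)).mpr hsum
  have hlt := Summable.tsum_lt_tsum_of_nonneg gnonneg (fun n => (hle' n).le) (hle' 0) hsummable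
  rw [htel.tsum_eq] at hlt
  rw [hrange] at hsplit
  linarith [hlt]


lemma logstep {n : ℕ} (hn : 1 ≤ n) :
    Real.log ((n:ℝ)+1) - Real.log (n:ℝ) ≤ 1/(2*(n:ℝ)) + 1/(2*((n:ℝ)+1)) := by
  have hn' : (0:ℝ) < (n:ℝ) := by exact_mod_cast hn
  have h1 := hasSum_log_one_add_inv hn'
  set y : ℝ := 1/(2*(n:ℝ)+1) with hy
  have hn1 : (0:ℝ) < 2*(n:ℝ)+1 := by linarith
  have hy0 : 0 < y := by positivity
  have hy1 : y < 1 := by rw [hy, div_lt_one hn1]; linarith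
  have hyy : y^2 < 1 := by nlinarith
  have h2 : HasSum (fun i : ℕ => 2*y*(y^2)^i) (2*y*(1-y^2)⁻¹) :=
    (hasSum_geometric_of_lt_one (by positivity) hyy).mul_left _
  have hle : Real.log (1+(n:ℝ)⁻¹) ≤ 2*y*(1-y^2)⁻¹ := by
    refine hasSum_le (fun i => ?_) h1 h2
    have e : y^(2*i+1) = (y^2)^i * y := by rw [pow_succ, pow_mul]
    rw [e]
    have h3 : (0:ℝ) ≤ (y^2)^i * y := by positivity
    have h4 : (1:ℝ)/(2*(i:ℝ)+1) ≤ 1 := by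
      rw [div_le_one (by positivity)]
      have : (0:ℝ) ≤ (i:ℝ) := by positivity
      linarith
    calc 2*(1/(2*(i:ℝ)+1))*((y^2)^i*y) ≤ 2*1*((y^2)^i*y) := by
          apply mul_le_mul_of_nonneg_right _ h3
          linarith
      _ = 2*y*(y^2)^i := by ring
  have hlog : Real.log (1+(n:ℝ)⁻¹) = Real.log ((n:ℝ)+1) - Real.log (n:ℝ) := by
    rw [show 1+(n:ℝ)⁻¹ = ((n:ℝ)+1)/(n:ℝ) by field_simp]
    exact Real.log_div (by linarith) hn'.ne'
  have heq : 2*y*(1-y^2)⁻¹ = 1/(2*(n:ℝ)) + 1/(2*((n:ℝ)+1)) := by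
    rw [hy]
    rw [show 1-(1/(2*(n:ℝ)+1))^2 = (4*(n:ℝ)*((n:ℝ)+1))/(2*(n:ℝ)+1)^2 by field_simp; ring]
    field_simp
    ring
  rw [hlog, heq] at hle
  exact hle

lemma log_le {k : ℕ} (hk : 1 ≤ k) : Real.log 2 ≤ Sf k + 1/(4*(k:ℝ)) := by
  have hk0 : (0:ℝ) < (k:ℝ) := by exact_mod_cast hk
  have htel : ∑ m ∈ range k, (Real.log (((k+m+1:ℕ)):ℝ) - Real.log ((k+m:ℕ):ℝ))
      = Real.log 2 := by
    have h := Finset.sum_range_sub (fun m : ℕ => Real.log ((k+m:ℕ):ℝ)) k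
    simp only [show ∀ m:ℕ, k+(m+1) = k+m+1 from fun m => by omega] at h
    rw [h, Nat.add_zero]
    have : ((k+k:ℕ):ℝ) = 2*(k:ℝ) := by push_cast; ring
    rw [this, show 2*(k:ℝ) = 2*(k:ℝ) from rfl]
    rw [Real.log_mul (by norm_num) hk0.ne']
    ring
  have hbound : ∀ m ∈ range k,
      Real.log (((k+m+1:ℕ)):ℝ) - Real.log ((k+m:ℕ):ℝ)
        ≤ 1/(2*((k:ℝ)+(m:ℝ))) + 1/(2*((k:ℝ)+(m:ℝ)+1)) := by
    intro m _
    have := logstep (n := k+m) (by omega)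
    push_cast at this ⊢
    convert this using 3 <;> ring
  have hsum := Finset.sum_le_sum hbound
  rw [htel] at hsum
  -- now compute the RHS sum
  obtain ⟨K, rfl⟩ : ∃ K, k = K+1 := ⟨k-1, by omega⟩
  set c : ℝ := (K:ℝ)+1 with hc
  have hc0 : (0:ℝ) < c := by positivity
  -- rewrite each bound term as halves
  have hsum' : Real.log 2 ≤ ∑ m ∈ range (K+1), ((1/(c+(m:ℝ)))/2 + (1/(c+(m:ℝ)+1))/2) := by
    refine le_trans hsum (le_of_eq (Finset.sum_congr rfl (fun m _ => ?_)))
    have h1 : (0:ℝ) < c+(m:ℝ) := by positivity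
    have h2 : (0:ℝ) < c+(m:ℝ)+1 := by positivity
    rw [show (((K+1:ℕ)):ℝ) = c by push_cast [hc]; ring]
    rw [show 2*(c+(m:ℝ)) = (c+(m:ℝ))*2 by ring, show 2*(c+(m:ℝ)+1) = (c+(m:ℝ)+1)*2 by ring,
      ← div_div, ← div_div]
  have hS' : Sf (K+1) = (∑ m ∈ range K, 1/(c+(m:ℝ)+1)) + 1/(2*c) := by
    rw [Sralt, Finset.sum_range_succ]
    congr 1
    · exact Finset.sum_congr rfl (fun m _ => by push_cast [hc]; ring_nf)
    · push_cast [hc]; ring_nf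
  have hA : ∑ m ∈ range (K+1), 1/(c+(m:ℝ)) = (∑ m ∈ range K, 1/(c+(m:ℝ)+1)) + 1/c := by
    rw [Finset.sum_range_succ' (fun m => 1/(c+(m:ℝ))) K]
    congr 1
    · exact Finset.sum_congr rfl (fun m _ => by push_cast; ring_nf)
    · norm_num
  have hB : ∑ m ∈ range (K+1), 1/(c+(m:ℝ)+1) = Sf (K+1) := by
    rw [Sralt]
    exact Finset.sum_congr rfl (fun m _ => by push_cast [hc]; ring_nf)
  have hhalf : ∑ m ∈ range (K+1), ((1/(c+(m:ℝ)))/2 + (1/(c+(m:ℝ)+1))/2)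
      = (∑ m ∈ range (K+1), 1/(c+(m:ℝ)))/2 + (∑ m ∈ range (K+1), 1/(c+(m:ℝ)+1))/2 := by
    rw [Finset.sum_add_distrib, Finset.sum_div, Finset.sum_div]
  rw [hhalf, hA, hB, hS'] at hsum'
  have hfin : ((∑ m ∈ range K, 1/(c+(m:ℝ)+1)) + 1/c)/2 + ((∑ m ∈ range K, 1/(c+(m:ℝ)+1)) + 1/(2*c))/2
      = Sf (K+1) + 1/(4*c) := by
    rw [hS']
    field_simp
    ring
  rw [hfin] at hsum'
  rw [show ((K+1:ℕ):ℝ) = c by push_cast [hc]; ring]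
  exact hsum'

end Stmt5Aux

open Stmt5Aux in
theorem stmt5 (k : ℕ) (hk : 2 ≤ k) (b1 : ℝ)
    (hb1 : b1 = 2 * ((Nat.choose (2*k) k : ℝ))⁻¹ *
      ∑ j ∈ Finset.Icc 2 k, (-1 : ℝ) ^ (j+1) * (Nat.choose (2*k) (k-j) : ℝ) *
        ((1 / (j : ℝ)) * (1 - 1 / (j : ℝ)))) :
    b1 < 0 ∧ 2 * Real.log 2 - π^2 / 6 < b1 := by
  have hX : (0:ℝ) < (Nat.choose (2*k) k : ℝ) := by
    exact_mod_cast Nat.choose_pos (by omega : k ≤ 2*k)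
  have hconv : ∑ j ∈ Finset.Icc 2 k, (-1 : ℝ) ^ (j+1) * (Nat.choose (2*k) (k-j) : ℝ) *
        ((1 / (j : ℝ)) * (1 - 1 / (j : ℝ)))
      = ∑ j ∈ Finset.Icc 2 k, (-1 : ℝ) ^ (j+1) * (Nat.choose (2*k) (k-j) : ℝ) *
        (1/(j:ℝ) - 1/(j:ℝ)^2) :=
    Finset.sum_congr rfl (fun j _ => by ring)
  have hb : b1 = 2 * Sf k - Qf k := by
    rw [hb1, hconv, Bid k]
    field_simp
  have h1 := part1 hk
  refine ⟨by linarith, ?_⟩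
  have h2 := basel_tail k
  have h3 := log_le (show 1 ≤ k by omega)
  have hkR : (2:ℝ) ≤ (k:ℝ) := by exact_mod_cast hk
  have h4 : 1/(2*(k:ℝ)) ≤ 1/((k:ℝ)+1) := by
    apply one_div_le_one_div_of_le (by linarith)
    linarith
  have he : 2*(1/(4*(k:ℝ))) = 1/(2*(k:ℝ)) := by
    have : (k:ℝ) ≠ 0 := by linarith
    field_simp
    ring
  linarith
end

section
/- For α > 1, sec(π/(2α)) ≤ (4/π)(1 − α^{-2})^{-1}. -/
open Real

lemma sin_lb (t : ℝ) (h0 : 0 ≤ t) (h1 : t ≤ π / 2) : t - t ^ 2 / π ≤ Real.sin t := by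
  have hπ := Real.pi_gt_d6
  have hπ' := Real.pi_lt_d2
  rcases eq_or_lt_of_le h0 with h | h
  · simp [← h]
  rcases le_or_gt t 1 with ht | ht
  · have h4 : t - t ^ 3 / 4 < Real.sin t := by
      have := Real.sin_gt_sub_cube h; nlinarith [pow_pos h 3]
    have h5 : t ^ 3 / 4 ≤ t ^ 2 / π := by
      rw [div_le_div_iff₀ (by norm_num) Real.pi_pos]
      have ht3 : t ^ 3 ≤ t ^ 2 := by nlinarith
      nlinarith [mul_le_mul_of_nonneg_right ht3 (le_of_lt Real.pi_pos), sq_nonneg t]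
    linarith
  · have hu : Real.sin t = Real.cos (π / 2 - t) := by
      rw [Real.cos_pi_div_two_sub]
    have hc := Real.one_sub_sq_div_two_le_cos (x := π / 2 - t)
    rw [hu]
    have hub : π / 2 - t ≤ π / 2 - 1 := by linarith
    have hlb : 0 ≤ π / 2 - t := by linarith
    have he : t - t ^ 2 / π = (t * π - t ^ 2) / π := by
      field_simp
    rw [he, div_le_iff₀ Real.pi_pos]
    have husq : (π / 2 - t) ^ 2 ≤ (π / 2 - 1) ^ 2 := by nlinarith
    nlinarith [sq_nonneg (π / 2 - t)]

theorem stmt16 (α : ℝ) (hα : 1 < α) :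
    (Real.cos (π / (2 * α)))⁻¹ ≤ (4 / π) * (1 - (α ^ 2)⁻¹)⁻¹ := by
  have hπ : 0 < π := Real.pi_pos
  have hα0 : 0 < α := by linarith
  set x := π / (2 * α) with hx
  have hx0 : 0 < x := by positivity
  have hx2 : x < π / 2 := by
    rw [hx, div_lt_div_iff₀ (by positivity) (by norm_num)]
    nlinarith
  have hkey : (π / 4) * (1 - (α ^ 2)⁻¹) ≤ Real.cos x := by
    have := sin_lb (π / 2 - x) (by linarith) (by linarith)
    rw [Real.sin_pi_div_two_sub] at this
    have hxsq : x ^ 2 = π ^ 2 / (4 * α ^ 2) := by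
      rw [hx]; field_simp; ring
    have hinv : (α ^ 2)⁻¹ = 1 / α ^ 2 := by rw [inv_eq_one_div]
    calc (π / 4) * (1 - (α ^ 2)⁻¹) = (π / 2 - x) - (π / 2 - x) ^ 2 / π := by
          rw [hinv, hx]; field_simp; ring
      _ ≤ Real.cos x := this
  have hcpos : 0 < Real.cos x := Real.cos_pos_of_mem_Ioo ⟨by linarith, hx2⟩
  have hfac : 0 < 1 - (α ^ 2)⁻¹ := by
    have : (α ^ 2)⁻¹ < 1 := by
      rw [inv_lt_one_iff₀]; right; nlinarith
    linarith
  have h1 : (Real.cos x)⁻¹ ≤ ((π / 4) * (1 - (α ^ 2)⁻¹))⁻¹ :=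
    inv_anti₀ (by positivity) hkey
  calc (Real.cos x)⁻¹ ≤ ((π / 4) * (1 - (α ^ 2)⁻¹))⁻¹ := h1
    _ = (4 / π) * (1 - (α ^ 2)⁻¹)⁻¹ := by
        rw [mul_inv]; congr 1
        rw [inv_div]
end
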